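/- Let s ≥ 1 be an integer. There is no sequence (b^{(n)})_{n∈ℕ} of s-tuples of real numbers with 0 < b_j^{(n)} ≤ 1, nondecreasing in each coordinate (b_j^{(n)} ≤ b_j^{(n+1)} for all j, n) and with b^{(n)} ≠ b^{(n+1)} for every n, such that for every n there exist an integer r ≥ 1, positive integers k_1,…,k_r, and nonnegative integers (l_{ij})_{1≤i≤r, 1≤j≤s} satisfying: (a) for every j, ∑_{i=1}^{r} l_{ij} ≥ 1; (b) for every i, ∑_{j=1}^{s} l_{ij}·b_j^{(n)} ≤ 1; and (c) ∑_{i=1}^{r} (k_i − 1 + ∑_{j=1}^{s} l_{ij}·b_j^{(n)}) / k_i = 2. -/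

import Mathlib

open Finset

private lemma row_le {k k' : ℕ} (hk : 1 ≤ k) (hkk : k ≤ k') {c c' : ℝ}
    (hc0 : 0 ≤ c) (hcc : c ≤ c') (hc1 : c' ≤ 1) :
    ((k : ℝ) - 1 + c) / k ≤ ((k' : ℝ) - 1 + c') / k' := by
  have hk0 : (0:ℝ) < k := by exact_mod_cast hk
  have hkk' : (k:ℝ) ≤ k' := by exact_mod_cast hkk
  have hk'0 : (0:ℝ) < k' := lt_of_lt_of_le hk0 hkk'
  have h1 : ((k : ℝ) - 1 + c) / k = 1 - (1 - c)/k := by field_simp; ring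
  have h2 : ((k' : ℝ) - 1 + c') / k' = 1 - (1 - c')/k' := by field_simp; ring
  rw [h1, h2]
  have key : (1 - c')/k' ≤ (1 - c)/k :=
    div_le_div₀ (by linarith) (by linarith) hk0 hkk'
  linarith

private lemma row_lt {k k' : ℕ} (hk : 1 ≤ k) (hkk : k ≤ k') {c c' : ℝ}
    (hc0 : 0 ≤ c) (hcc : c < c') (hc1 : c' ≤ 1) :
    ((k : ℝ) - 1 + c) / k < ((k' : ℝ) - 1 + c') / k' := by
  have hk0 : (0:ℝ) < k := by exact_mod_cast hk
  have hkk' : (k:ℝ) ≤ k' := by exact_mod_cast hkk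
  have hk'0 : (0:ℝ) < k' := lt_of_lt_of_le hk0 hkk'
  have h1 : ((k : ℝ) - 1 + c) / k = 1 - (1 - c)/k := by field_simp; ring
  have h2 : ((k' : ℝ) - 1 + c') / k' = 1 - (1 - c')/k' := by field_simp; ring
  rw [h1, h2]
  have h3 : (1 - c')/k' ≤ (1 - c')/k := div_le_div₀ (by linarith) le_rfl hk0 hkk'
  have h4 : (1 - c')/k < (1 - c)/k := div_lt_div_of_pos_right (by linarith) hk0
  linarith

theorem one_dimensional_acc (s : ℕ) (hs : 1 ≤ s) :
    ¬ ∃ b : ℕ → Fin s → ℝ,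
      (∀ n j, 0 < b n j) ∧ (∀ n j, b n j ≤ 1) ∧
      (∀ n j, b n j ≤ b (n + 1) j) ∧ (∀ n, b n ≠ b (n + 1)) ∧
      (∀ n, ∃ (r : ℕ) (_ : 1 ≤ r) (k : Fin r → ℕ) (l : Fin r → Fin s → ℕ),
        (∀ i, 1 ≤ k i) ∧
        (∀ j, 1 ≤ ∑ i, l i j) ∧
        (∀ i, ∑ j, (l i j : ℝ) * b n j ≤ 1) ∧
        ∑ i, ((k i : ℝ) - 1 + ∑ j, (l i j : ℝ) * b n j) / (k i : ℝ) = 2) := by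
  rintro ⟨b, hpos, hle1, hstep, hne, hdata⟩
  haveI hsne : Nonempty (Fin s) := ⟨⟨0, hs⟩⟩
  have hmono : ∀ {n m : ℕ}, n ≤ m → ∀ j, b n j ≤ b m j := by
    intro n m hnm j
    induction m with
    | zero => simp_all
    | succ m ih =>
      rcases Nat.lt_or_ge n (m+1) with h | h
      · exact le_trans (ih (by omega)) (hstep m j)
      · have : n = m + 1 := by omega
        subst this; rfl
  -- minimal coefficient
  set ε : ℝ := Finset.univ.inf' Finset.univ_nonempty (b 0) with hεdef
  have hε0 : 0 < ε := (Finset.lt_inf'_iff _).mpr fun j _ => hpos 0 j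
  have hεle : ∀ n j, ε ≤ b n j := fun n j =>
    le_trans (Finset.inf'_le _ (Finset.mem_univ j)) (hmono (Nat.zero_le n) j)
  set δ : ℝ := min ε (1/2) with hδdef
  have hδ0 : 0 < δ := lt_min hε0 (by norm_num)
  have hδε : δ ≤ ε := min_le_left _ _
  have hδhalf : δ ≤ 1/2 := min_le_right _ _
  set M : ℕ := ⌈1/ε⌉₊ with hMdef
  set R : ℕ := ⌈2/δ⌉₊ with hRdef
  -- normalization
  have main : ∀ n, ∃ (k : Fin R → ℕ) (l : Fin R → Fin s → ℕ),
      (∀ i, 1 ≤ k i) ∧ (∀ i j, l i j ≤ M) ∧ (∀ j, ∃ i, 1 ≤ l i j) ∧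
      (∀ i, ∑ j, (l i j : ℝ) * b n j ≤ 1) ∧
      (∑ i, ((k i : ℝ) - 1 + ∑ j, (l i j : ℝ) * b n j) / (k i : ℝ) = 2) := by
    intro n
    obtain ⟨r, hr, k, l, hk, ha, hb, hc⟩ := hdata n
    have hcnn : ∀ i, (0:ℝ) ≤ ∑ j, (l i j : ℝ) * b n j := fun i =>
      Finset.sum_nonneg fun j _ => mul_nonneg (Nat.cast_nonneg _) (hpos n j).le
    set t : Fin r → ℝ := fun i => ((k i : ℝ) - 1 + ∑ j, (l i j : ℝ) * b n j) / (k i : ℝ)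
      with htdef
    have hkpos : ∀ i, (0:ℝ) < k i := fun i => by exact_mod_cast hk i
    have ht0 : ∀ i, 0 ≤ t i := fun i => by
      apply div_nonneg _ (hkpos i).le
      have : (1:ℝ) ≤ k i := by exact_mod_cast hk i
      linarith [hcnn i]
    have hlM : ∀ i j, l i j ≤ M := by
      intro i j
      have h1 : (l i j : ℝ) * b n j ≤ 1 :=
        le_trans (Finset.single_le_sum (f := fun j => (l i j : ℝ) * b n j)
          (fun j _ => mul_nonneg (Nat.cast_nonneg _) (hpos n j).le) (Finset.mem_univ j)) (hb i)
      have h2 : (l i j : ℝ) * ε ≤ 1 :=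
        le_trans (mul_le_mul_of_nonneg_left (hεle n j) (Nat.cast_nonneg _)) h1
      have h3 : (l i j : ℝ) ≤ 1/ε := by
        rw [le_div_iff₀ hε0]; exact h2
      have h4 : (l i j : ℝ) ≤ (M : ℝ) := le_trans h3 (Nat.le_ceil _)
      exact_mod_cast h4
    set T : Finset (Fin r) := Finset.univ.filter (fun i => 2 ≤ k i ∨ l i ≠ 0) with hTdef
    have htzero : ∀ i ∉ T, t i = 0 := by
      intro i hi
      simp only [hTdef, Finset.mem_filter, Finset.mem_univ, true_and, not_or, not_le,
        not_not] at hi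
      obtain ⟨hki, hli⟩ := hi
      have hki1 : k i = 1 := by have := hk i; omega
      have hlij : ∀ j, l i j = 0 := fun j => by rw [hli]; rfl
      simp [htdef, hki1, hlij]
    have htδ : ∀ i ∈ T, δ ≤ t i := by
      intro i hi
      by_cases hk2 : 2 ≤ k i
      · have h2 : (2:ℝ) ≤ k i := by exact_mod_cast hk2
        refine le_trans hδhalf ?_
        rw [htdef]
        rw [le_div_iff₀ (hkpos i)]
        have := hcnn i
        linarith
      · simp only [hTdef, Finset.mem_filter, Finset.mem_univ, true_and] at hi
        rcases hi with h | h
        · exact absurd h hk2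
        · have hki1 : k i = 1 := by have := hk i; omega
          obtain ⟨j0, hj0⟩ : ∃ j0, l i j0 ≠ 0 := by
            by_contra hcon
            push_neg at hcon
            exact h (funext hcon)
          have h1 : ε ≤ (l i j0 : ℝ) * b n j0 := by
            have hl1 : (1:ℝ) ≤ (l i j0 : ℝ) := by
              exact_mod_cast Nat.one_le_iff_ne_zero.mpr hj0
            calc ε ≤ b n j0 := hεle n j0
            _ = 1 * b n j0 := (one_mul _).symm
            _ ≤ (l i j0 : ℝ) * b n j0 := by
                exact mul_le_mul_of_nonneg_right hl1 (hpos n j0).le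
          have h2 : ε ≤ ∑ j, (l i j : ℝ) * b n j :=
            le_trans h1 (Finset.single_le_sum (f := fun j => (l i j : ℝ) * b n j)
              (fun j _ => mul_nonneg (Nat.cast_nonneg _) (hpos n j).le) (Finset.mem_univ j0))
          refine le_trans hδε ?_
          rw [htdef]
          simp only [hki1, Nat.cast_one]
          rw [le_div_iff₀ (by norm_num : (0:ℝ) < 1)]
          linarith
    have hsumT : ∑ i ∈ T, t i = 2 := by
      rw [Finset.sum_subset (Finset.subset_univ T) (fun x _ hx => htzero x hx)]
      exact hc
    have hcard : T.card ≤ R := by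
      have h1 : (T.card : ℝ) * δ ≤ ∑ i ∈ T, t i := by
        have := Finset.card_nsmul_le_sum T t δ htδ
        rwa [nsmul_eq_mul] at this
      rw [hsumT] at h1
      have h2 : (T.card : ℝ) ≤ 2/δ := by
        rw [le_div_iff₀ hδ0]; exact h1
      have h3 : (T.card : ℝ) ≤ (R : ℝ) := le_trans h2 (Nat.le_ceil _)
      exact_mod_cast h3
    set e := T.orderIsoOfFin rfl with hedef
    refine ⟨fun i => if h : (i:ℕ) < T.card then k (e ⟨i, h⟩) else 1,
            fun i j => if h : (i:ℕ) < T.card then l (e ⟨i, h⟩) j else 0, ?_, ?_, ?_, ?_, ?_⟩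
    · intro i
      dsimp only
      split
      · exact hk _
      · exact le_rfl
    · intro i j
      dsimp only
      split
      · exact hlM _ _
      · exact Nat.zero_le _
    · intro j
      obtain ⟨i0, -, hi0⟩ := Finset.exists_ne_zero_of_sum_ne_zero
        (Nat.one_le_iff_ne_zero.mp (ha j))
      have hmem : i0 ∈ T := by
        simp only [hTdef, Finset.mem_filter, Finset.mem_univ, true_and]
        exact Or.inr (fun hh => hi0 (by rw [hh]; rfl))
      set a : Fin T.card := e.symm ⟨i0, hmem⟩ with hadef
      refine ⟨⟨(a : ℕ), lt_of_lt_of_le a.isLt hcard⟩, ?_⟩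
      dsimp only
      rw [dif_pos (show ((a:ℕ) : ℕ) < T.card from a.isLt)]
      have : (⟨(a:ℕ), a.isLt⟩ : Fin T.card) = a := rfl
      rw [this, hadef, e.apply_symm_apply]
      exact Nat.one_le_iff_ne_zero.mpr hi0
    · intro i
      dsimp only
      by_cases h : (i:ℕ) < T.card
      · simp only [dif_pos h]
        exact hb _
      · simp only [dif_neg h, Nat.cast_zero, zero_mul, Finset.sum_const_zero]
        norm_num
    · dsimp only
      -- the sum over Fin R equals the sum over T
      set F : Fin R → ℝ := fun i =>
        ((if h : (i:ℕ) < T.card then (k (e ⟨i, h⟩) : ℝ) else 1) - 1 +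
          ∑ j, (if h : (i:ℕ) < T.card then (l (e ⟨i, h⟩) j : ℝ) else 0) * b n j) /
          (if h : (i:ℕ) < T.card then (k (e ⟨i, h⟩) : ℝ) else 1) with hFdef
      have hcast : ∀ i : Fin R,
          ((if h : (i:ℕ) < T.card then k (e ⟨i, h⟩) else 1 : ℕ) : ℝ) - 1 +
            (∑ j, ((if h : (i:ℕ) < T.card then l (e ⟨i, h⟩) j else 0 : ℕ) : ℝ) * b n j) =
          (if h : (i:ℕ) < T.card then (k (e ⟨i, h⟩) : ℝ) else 1) - 1 +
            ∑ j, (if h : (i:ℕ) < T.card then (l (e ⟨i, h⟩) j : ℝ) else 0) * b n j := by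
        intro i
        by_cases h : (i:ℕ) < T.card <;> simp [h]
      have hgoal : ∑ i, F i = 2 := by
        let ι : Fin T.card ↪ Fin R :=
          ⟨fun a => ⟨a, lt_of_lt_of_le a.isLt hcard⟩, by
            intro x y hxy
            apply Fin.ext
            simpa using congrArg Fin.val hxy⟩
        have hFzero : ∀ x ∈ Finset.univ, x ∉ Finset.univ.map ι → F x = 0 := by
          intro x _ hx
          have hnotlt : ¬ ((x:ℕ) < T.card) := by
            intro hlt
            exact hx (Finset.mem_map.mpr ⟨⟨(x:ℕ), hlt⟩, Finset.mem_univ _, Fin.ext rfl⟩)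
          simp [hFdef, dif_neg hnotlt]
        have h1 : ∑ i, F i = ∑ i ∈ Finset.univ.map ι, F i :=
          (Finset.sum_subset (Finset.subset_univ _) hFzero).symm
        have h2 : ∑ i ∈ Finset.univ.map ι, F i = ∑ a : Fin T.card, F (ι a) :=
          Finset.sum_map _ _ _
        have h3 : ∀ a : Fin T.card, F (ι a) = t (e a) := by
          intro a
          have hlt : ((ι a : Fin R) : ℕ) < T.card := a.isLt
          have heq : (⟨((ι a : Fin R) : ℕ), hlt⟩ : Fin T.card) = a := Fin.ext rfl
          simp only [hFdef, dif_pos hlt, heq, htdef]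
        have h4 : ∑ a : Fin T.card, t ((e a : T) : Fin r) = ∑ x : T, t x :=
          Equiv.sum_comp e.toEquiv (fun x : T => t x)
        have h5 : ∑ x : T, t ((x : Fin r)) = ∑ x ∈ T, t x := Finset.sum_coe_sort T t
        rw [h1, h2]
        simp_rw [h3]
        rw [h4, h5, hsumT]
      rw [← hgoal]
      apply Finset.sum_congr rfl
      intro i _
      by_cases h : (i:ℕ) < T.card <;> simp [hFdef, h]
  -- choose normalized data
  choose K L hK hLM hatt hb1 hsum using main
  -- pigeonhole on L
  let φ : ℕ → (Fin R → Fin s → Fin (M+1)) := fun n i j => ⟨L n i j, Nat.lt_succ_of_le (hLM n i j)⟩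
  obtain ⟨y, hy⟩ := Finite.exists_infinite_fiber φ
  set p : ℕ → Prop := fun n => φ n = y with hpdef
  have hp : (setOf p).Infinite := Set.infinite_coe_iff.mp hy
  have hmem : ∀ a, p (Nat.nth p a) := fun a => Nat.nth_mem_of_infinite hp a
  haveI : IsWellOrder ℕ (· < ·) := inferInstance
  have hPWO := Set.isPWO_of_wellQuasiOrderedLE (α := Fin R → ℕ) Set.univ
  obtain ⟨a, a', haa, hKle⟩ := hPWO.exists_lt (f := fun a => K (Nat.nth p a)) (fun _ => Set.mem_univ _)
  set n := Nat.nth p a with hndef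
  set m := Nat.nth p a' with hmdef
  have hnm : n < m := (Nat.nth_lt_nth hp).mpr haa
  have hLeq : ∀ i j, L n i j = L m i j := by
    intro i j
    have h1 : φ n = φ m := (hmem a).trans (hmem a').symm
    exact congrArg Fin.val (congrFun (congrFun h1 i) j)
  have hKle' : ∀ i, K n i ≤ K m i := fun i => hKle i
  -- strict increase at some coordinate
  have hbnm : ∀ j, b n j ≤ b m j := fun j => hmono hnm.le j
  obtain ⟨jx, hjx⟩ : ∃ j, b n j < b m j := by
    by_contra hcon
    push_neg at hcon
    have hbeq : b n = b m := funext fun j => le_antisymm (hbnm j) (hcon j)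
    apply hne n
    funext j
    have h1 := hstep n j
    have h2 : b (n+1) j ≤ b m j := hmono (by omega) j
    have h3 : b m j = b n j := (congrFun hbeq j).symm
    linarith
  obtain ⟨i0, hi0⟩ := hatt n jx
  -- compare the two identities
  have hcle : ∀ i, ∑ j, (L n i j : ℝ) * b n j ≤ ∑ j, (L m i j : ℝ) * b m j := by
    intro i
    apply Finset.sum_le_sum
    intro j _
    rw [hLeq i j]
    exact mul_le_mul_of_nonneg_left (hbnm j) (Nat.cast_nonneg _)
  have hcnn : ∀ i, (0:ℝ) ≤ ∑ j, (L n i j : ℝ) * b n j := fun i =>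
    Finset.sum_nonneg fun j _ => mul_nonneg (Nat.cast_nonneg _) (hpos n j).le
  have hterm : ∀ i : Fin R,
      ((K n i : ℝ) - 1 + ∑ j, (L n i j : ℝ) * b n j) / (K n i : ℝ) ≤
      ((K m i : ℝ) - 1 + ∑ j, (L m i j : ℝ) * b m j) / (K m i : ℝ) := fun i =>
    row_le (hK n i) (hKle' i) (hcnn i) (hcle i) (hb1 m i)
  have hstrict :
      ((K n i0 : ℝ) - 1 + ∑ j, (L n i0 j : ℝ) * b n j) / (K n i0 : ℝ) <
      ((K m i0 : ℝ) - 1 + ∑ j, (L m i0 j : ℝ) * b m j) / (K m i0 : ℝ) := by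
    apply row_lt (hK n i0) (hKle' i0) (hcnn i0) ?_ (hb1 m i0)
    apply Finset.sum_lt_sum
    · intro j _
      rw [hLeq i0 j]
      exact mul_le_mul_of_nonneg_left (hbnm j) (Nat.cast_nonneg _)
    · refine ⟨jx, Finset.mem_univ _, ?_⟩
      rw [hLeq i0 jx]
      have hl0 : (0:ℝ) < (L m i0 jx : ℝ) := by
        rw [← hLeq i0 jx]
        exact_mod_cast hi0
      exact mul_lt_mul_of_pos_left hjx hl0
  have : (2:ℝ) < 2 := by
    calc (2:ℝ) = ∑ i, ((K n i : ℝ) - 1 + ∑ j, (L n i j : ℝ) * b n j) / (K n i : ℝ) :=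
        (hsum n).symm
    _ < ∑ i, ((K m i : ℝ) - 1 + ∑ j, (L m i j : ℝ) * b m j) / (K m i : ℝ) :=
        Finset.sum_lt_sum (fun i _ => hterm i) ⟨i0, Finset.mem_univ _, hstrict⟩
    _ = 2 := hsum m
  exact absurd this (lt_irrefl 2)
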